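/- The ring k[x_1,…,x_m, y_1,…,y_m]/Ī_m is reduced, i.e. the ideal Ī_m is a radical ideal. This is the chart-level form of Theorem 5.1(b): the special fiber of the splitting model M^spl_I is reduced. -/

import Mathlib

/-!
STATEMENT 1: The special fiber chart ring `k[x₁,…,xₘ,yₘ]/Ī_m` is reduced,
i.e. `Ī_m` is a radical ideal, where `k` is a field of characteristic ≠ 2 and `Ī_m`
is generated by the 2×2 minors `xᵢyⱼ − xⱼyᵢ` (`i < j`) together with `Σᵢ xᵢ y_{m+1−i}`.
-/

open MvPolynomial

/-- The `x`-variables. -/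
noncomputable def xVar {m : ℕ} (k : Type*) [CommRing k] (i : Fin m) :
    MvPolynomial (Fin m ⊕ Fin m) k := X (Sum.inl i)

/-- The `y`-variables. -/
noncomputable def yVar {m : ℕ} (k : Type*) [CommRing k] (i : Fin m) :
    MvPolynomial (Fin m ⊕ Fin m) k := X (Sum.inr i)

/-- The ideal `Ī_m`, generated by the 2×2 minors `xᵢyⱼ − xⱼyᵢ` for `i < j` together with
`Σ_{i=1}^m xᵢ y_{m+1−i}`  (here `Fin.rev` realizes `i ↦ m+1−i` in 0-indexing). -/
noncomputable def specialChartIdeal (k : Type*) [CommRing k] (m : ℕ) :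
    Ideal (MvPolynomial (Fin m ⊕ Fin m) k) :=
  Ideal.span
    ({p | ∃ i j : Fin m, i < j ∧ p = xVar k i * yVar k j - xVar k j * yVar k i} ∪
      {∑ i : Fin m, xVar k i * yVar k i.rev})

namespace SpecialChartAux

open Finsupp

/-! ### Generalities: substituting a variable by `0`, primality of variables -/

section KillVar

variable {K : Type*} [CommRing K] {σ : Type*} [DecidableEq σ]

/-- The algebra map substituting `X i ↦ 0`. -/
noncomputable def kill (K : Type*) [CommRing K] {σ : Type*} [DecidableEq σ] (i : σ) :
    MvPolynomial σ K →ₐ[K] MvPolynomial σ K :=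
  aeval (fun v => if v = i then 0 else X v)

lemma kill_X_self (i : σ) : kill K i (X i) = 0 := by
  rw [kill, aeval_X, if_pos rfl]

lemma kill_X_of_ne {i v : σ} (h : v ≠ i) : kill K i (X v) = X v := by
  rw [kill, aeval_X, if_neg h]

lemma kill_monomial (i : σ) (d : σ →₀ ℕ) (c : K) :
    kill K i (monomial d c) = if d i = 0 then monomial d c else 0 := by
  rw [kill, aeval_monomial]
  split_ifs with h
  · have hprod : (d.prod fun v e => (if v = i then (0 : MvPolynomial σ K) else X v) ^ e)
        = d.prod fun v e => (X v) ^ e := by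
      apply Finsupp.prod_congr
      intro v hv
      have hvi : v ≠ i := by
        intro hvi
        exact (Finsupp.mem_support_iff.mp hv) (hvi ▸ h)
      rw [if_neg hvi]
    rw [hprod, algebraMap_eq, ← monomial_eq]
  · apply mul_eq_zero_of_right
    refine Finset.prod_eq_zero (Finsupp.mem_support_iff.mpr h) ?_
    simp only [if_pos rfl]
    exact zero_pow h

lemma kill_eq_zero_of_dvd {i : σ} {p : MvPolynomial σ K} (h : X i ∣ p) :
    kill K i p = 0 := by
  obtain ⟨r, rfl⟩ := h
  rw [map_mul, kill_X_self, zero_mul]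

lemma dvd_of_kill_eq_zero {i : σ} {p : MvPolynomial σ K} (h : kill K i p = 0) :
    X i ∣ p := by
  classical
  have hsplit :
      p = (∑ d ∈ p.support.filter fun d => ¬ d i = 0, monomial d (coeff d p)) + kill K i p := by
    have hk : kill K i p = ∑ d ∈ p.support.filter fun d => d i = 0, monomial d (coeff d p) := by
      conv_lhs => rw [← support_sum_monomial_coeff p]
      rw [map_sum]
      rw [Finset.sum_filter]
      apply Finset.sum_congr rfl
      intro d _
      rw [kill_monomial]
    rw [hk, add_comm, Finset.sum_filter_add_sum_filter_not]
    exact (support_sum_monomial_coeff p).symm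
  rw [hsplit, h, add_zero]
  apply Finset.dvd_sum
  intro d hd
  rw [X_dvd_monomial]
  exact Or.inr (Finset.mem_filter.mp hd).2

variable [IsDomain K]

lemma prime_X_mv (i : σ) : Prime (X i : MvPolynomial σ K) := by
  refine ⟨X_ne_zero i, ?_, ?_⟩
  · intro hu
    have := hu.map (kill K i)
    rw [kill_X_self] at this
    exact one_ne_zero ((isUnit_zero_iff.mp this).symm)
  · intro a b hab
    have h0 : kill K i a * kill K i b = 0 := by
      rw [← map_mul]
      exact kill_eq_zero_of_dvd hab
    rcases mul_eq_zero.mp h0 with h | h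
    · exact Or.inl (dvd_of_kill_eq_zero h)
    · exact Or.inr (dvd_of_kill_eq_zero h)

end KillVar

/-! ### The Segre-type map `φ` and the exponent bookkeeping map `E` -/

section Phi

variable (k : Type*) [Field k] (m : ℕ)

/-- The map `x_i ↦ s·u_i`, `y_i ↦ t·u_i`, where `s = X (inl true)`, `t = X (inl false)`,
`u_i = X (inr i)`. -/
noncomputable def phi : MvPolynomial (Fin m ⊕ Fin m) k →ₐ[k] MvPolynomial (Bool ⊕ Fin m) k :=
  aeval (Sum.elim
    (fun i => X (Sum.inl true) * X (Sum.inr i))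
    (fun i => X (Sum.inl false) * X (Sum.inr i)))

/-- exponent of the image of a variable. -/
noncomputable def gE : Fin m ⊕ Fin m → ((Bool ⊕ Fin m) →₀ ℕ) :=
  Sum.elim
    (fun i => Finsupp.single (Sum.inl true) 1 + Finsupp.single (Sum.inr i) 1)
    (fun i => Finsupp.single (Sum.inl false) 1 + Finsupp.single (Sum.inr i) 1)

/-- exponent map on monomials induced by `phi`. -/
noncomputable def Emap (d : (Fin m ⊕ Fin m) →₀ ℕ) : (Bool ⊕ Fin m) →₀ ℕ :=
  d.sum fun v e => e • gE m v

variable {k m}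

lemma phi_X (v : Fin m ⊕ Fin m) : phi k m (X v) = monomial (gE m v) 1 := by
  have hXX : ∀ a b : Bool ⊕ Fin m,
      (X a * X b : MvPolynomial (Bool ⊕ Fin m) k)
        = monomial (Finsupp.single a 1 + Finsupp.single b 1) 1 := by
    intro a b
    rw [← pow_one (X a : MvPolynomial (Bool ⊕ Fin m) k),
      ← pow_one (X b : MvPolynomial (Bool ⊕ Fin m) k), X_pow_eq_monomial, X_pow_eq_monomial,
      monomial_mul, one_mul]
  cases v with
  | inl i => rw [phi, aeval_X, Sum.elim_inl, hXX]; rfl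
  | inr i => rw [phi, aeval_X, Sum.elim_inr, hXX]; rfl

lemma phi_C (c : k) : phi k m (C c) = C c := by
  rw [← MvPolynomial.algebraMap_eq]
  exact AlgHom.commutes _ c

lemma Emap_zero : Emap m (0 : (Fin m ⊕ Fin m) →₀ ℕ) = 0 := by
  simp [Emap]

lemma Emap_add (d₁ d₂ : (Fin m ⊕ Fin m) →₀ ℕ) :
    Emap m (d₁ + d₂) = Emap m d₁ + Emap m d₂ := by
  classical
  apply Finsupp.sum_add_index'
  · intro v; rw [zero_smul]
  · intro v e₁ e₂; rw [add_smul]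

lemma Emap_single (v : Fin m ⊕ Fin m) (e : ℕ) :
    Emap m (Finsupp.single v e) = e • gE m v := by
  classical
  apply Finsupp.sum_single_index
  rw [zero_smul]

lemma phi_monomial (d : (Fin m ⊕ Fin m) →₀ ℕ) (c : k) :
    phi k m (monomial d c) = monomial (Emap m d) c := by
  classical
  induction d using Finsupp.induction with
  | zero =>
    rw [Emap_zero]
    rw [monomial_zero', monomial_zero']
    exact phi_C c
  | single_add v e d hv he IH =>
    rw [monomial_single_add, map_mul, map_pow, phi_X, IH, monomial_pow, one_pow,
      monomial_mul, one_mul, Emap_add, Emap_single]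

lemma Emap_apply (d : (Fin m ⊕ Fin m) →₀ ℕ) (pt : Bool ⊕ Fin m) :
    Emap m d pt = ∑ v : Fin m ⊕ Fin m, d v * gE m v pt := by
  classical
  rw [Emap, Finsupp.sum_fintype _ _ (fun v => by rw [zero_smul]), Finsupp.finset_sum_apply]
  apply Finset.sum_congr rfl
  intro v _
  rw [Finsupp.smul_apply, smul_eq_mul]

lemma Emap_inl_true (d : (Fin m ⊕ Fin m) →₀ ℕ) :
    Emap m d (Sum.inl true) = ∑ i : Fin m, d (Sum.inl i) := by
  rw [Emap_apply, Fintype.sum_sum_type]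
  simp [gE, Finsupp.single_apply]

lemma Emap_inl_false (d : (Fin m ⊕ Fin m) →₀ ℕ) :
    Emap m d (Sum.inl false) = ∑ i : Fin m, d (Sum.inr i) := by
  rw [Emap_apply, Fintype.sum_sum_type]
  simp [gE, Finsupp.single_apply]

lemma Emap_inr (d : (Fin m ⊕ Fin m) →₀ ℕ) (i : Fin m) :
    Emap m d (Sum.inr i) = d (Sum.inl i) + d (Sum.inr i) := by
  rw [Emap_apply, Fintype.sum_sum_type]
  simp [gE, Finsupp.single_apply]

end Phi

/-! ### The minors ideal and the straightening (swap) lemma -/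

section Minors

variable (k : Type*) [Field k] (m : ℕ)

/-- The ideal generated by the 2×2 minors. -/
noncomputable def Imin : Ideal (MvPolynomial (Fin m ⊕ Fin m) k) :=
  Ideal.span {p | ∃ i j : Fin m, i < j ∧
    p = X (Sum.inl i) * X (Sum.inr j) - X (Sum.inl j) * X (Sum.inr i)}

variable {k m}

lemma minor_mem {i j : Fin m} (h : i ≠ j) :
    X (Sum.inl i) * X (Sum.inr j) - X (Sum.inl j) * X (Sum.inr i) ∈ Imin k m := by
  rcases lt_or_gt_of_ne h with hij | hij
  · exact Ideal.subset_span ⟨i, j, hij, rfl⟩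
  · have hmem : X (Sum.inl j) * X (Sum.inr i) - X (Sum.inl i) * X (Sum.inr j) ∈ Imin k m :=
      Ideal.subset_span ⟨j, i, hij, rfl⟩
    have : X (Sum.inl i) * X (Sum.inr j) - X (Sum.inl j) * X (Sum.inr i)
        = -(X (Sum.inl j) * X (Sum.inr i) - X (Sum.inl i) * X (Sum.inr j) :
            MvPolynomial (Fin m ⊕ Fin m) k) := by ring
    rw [this]
    exact neg_mem hmem

lemma swap_lemma (a : ℕ) :
    ∀ d d' : (Fin m ⊕ Fin m) →₀ ℕ, Emap m d = Emap m d' →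
      (∑ i : Fin m, d (Sum.inl i)) = a →
      monomial d (1 : k) - monomial d' 1 ∈ Imin k m := by
  classical
  induction a with
  | zero =>
    intro d d' hE hsum
    have hsum' : (∑ i : Fin m, d' (Sum.inl i)) = 0 := by
      rw [← Emap_inl_true, ← hE, Emap_inl_true, hsum]
    have h1 : ∀ i : Fin m, d (Sum.inl i) = 0 := by
      intro i
      exact (Finset.sum_eq_zero_iff.mp hsum) i (Finset.mem_univ i)
    have h2 : ∀ i : Fin m, d' (Sum.inl i) = 0 := by
      intro i
      exact (Finset.sum_eq_zero_iff.mp hsum') i (Finset.mem_univ i)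
    have hdd : d = d' := by
      ext v
      cases v with
      | inl i => rw [h1 i, h2 i]
      | inr i =>
        have h3 := congrArg (fun g => g (Sum.inr i)) hE
        simp only [Emap_inr] at h3
        rw [h1 i, h2 i] at h3
        simpa using h3
    rw [hdd, sub_self]
    exact zero_mem _
  | succ a IH =>
    intro d d' hE hsum
    have hne : ∃ i : Fin m, d (Sum.inl i) ≠ 0 := by
      by_contra hcon
      push_neg at hcon
      rw [Finset.sum_eq_zero (fun i _ => hcon i)] at hsum
      exact (Nat.succ_ne_zero a) hsum.symm
    obtain ⟨i, hdi⟩ := hne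
    -- the key reduction when both exponents of `x i` are positive
    have key : ∀ d₂ : (Fin m ⊕ Fin m) →₀ ℕ, Emap m d = Emap m d₂ →
        d₂ (Sum.inl i) ≠ 0 → monomial d (1 : k) - monomial d₂ 1 ∈ Imin k m := by
      intro d₂ hE₂ h₂
      set e : (Fin m ⊕ Fin m) →₀ ℕ := d - Finsupp.single (Sum.inl i) 1 with he
      set e₂ : (Fin m ⊕ Fin m) →₀ ℕ := d₂ - Finsupp.single (Sum.inl i) 1 with he₂
      have hd : e + Finsupp.single (Sum.inl i) 1 = d := by
        ext v
        simp only [he, Finsupp.add_apply, Finsupp.tsub_apply, Finsupp.single_apply]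
        split_ifs with h1
        · subst h1; omega
        · omega
      have hd₂ : e₂ + Finsupp.single (Sum.inl i) 1 = d₂ := by
        ext v
        simp only [he₂, Finsupp.add_apply, Finsupp.tsub_apply, Finsupp.single_apply]
        split_ifs with h1
        · subst h1; omega
        · omega
      have hEe : Emap m e = Emap m e₂ := by
        have h1 : Emap m e + Emap m (Finsupp.single (Sum.inl i) 1)
            = Emap m e₂ + Emap m (Finsupp.single (Sum.inl i) 1) := by
          rw [← Emap_add, ← Emap_add, hd, hd₂, hE₂]
        exact add_right_cancel h1
      have hsum' : (∑ i' : Fin m, e (Sum.inl i')) = a := by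
        have h1 : (∑ i' : Fin m, d (Sum.inl i'))
            = (∑ i' : Fin m, e (Sum.inl i'))
              + (∑ i' : Fin m, (Finsupp.single (Sum.inl i) (1 : ℕ) : (Fin m ⊕ Fin m) →₀ ℕ)
                  (Sum.inl i')) := by
          rw [← Finset.sum_add_distrib]
          apply Finset.sum_congr rfl
          intro i' _
          rw [← hd]
          simp [Finsupp.add_apply]
        have h2 : (∑ i' : Fin m, (Finsupp.single (Sum.inl i) (1 : ℕ) : (Fin m ⊕ Fin m) →₀ ℕ)
            (Sum.inl i')) = 1 := by
          simp [Finsupp.single_apply]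
        rw [h1, h2] at hsum
        omega
      have hIH := IH e e₂ hEe hsum'
      have hfac : monomial d (1 : k) - monomial d₂ 1
          = X (Sum.inl i) * (monomial e 1 - monomial e₂ 1) := by
        rw [mul_sub, ← hd, ← hd₂, monomial_add_single, monomial_add_single, pow_one]
        ring
      rw [hfac]
      exact Ideal.mul_mem_left _ _ hIH
    by_cases hd'i : d' (Sum.inl i) = 0
    · -- need a swap through a minor
      have hsum'' : (∑ i' : Fin m, d' (Sum.inl i')) = a + 1 := by
        rw [← Emap_inl_true, ← hE, Emap_inl_true, hsum]
      have hj : ∃ j : Fin m, d' (Sum.inl j) ≠ 0 := by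
        by_contra hcon
        push_neg at hcon
        rw [Finset.sum_eq_zero (fun j _ => hcon j)] at hsum''
        exact (Nat.succ_ne_zero a) hsum''.symm
      obtain ⟨j, hj⟩ := hj
      have hij : i ≠ j := by
        intro hh
        exact hj (hh ▸ hd'i)
      have hd'ri : d' (Sum.inr i) ≠ 0 := by
        have h3 := congrArg (fun g => g (Sum.inr i)) hE
        simp only [Emap_inr] at h3
        omega
      set e' : (Fin m ⊕ Fin m) →₀ ℕ :=
        d' - Finsupp.single (Sum.inl j) 1 - Finsupp.single (Sum.inr i) 1 with he'
      have hrep : e' + Finsupp.single (Sum.inl j) 1 + Finsupp.single (Sum.inr i) 1 = d' := by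
        ext v
        simp only [he', Finsupp.add_apply, Finsupp.tsub_apply, Finsupp.single_apply]
        split_ifs <;>
          first
            | omega
            | (rename_i h1 h2; subst h1; omega)
            | (rename_i h1 h2; subst h2; omega)
            | (rename_i h1 h2; rw [← h1] at h2; exact absurd h2 (by simp))
            | (rename_i h1; subst h1; omega)
      set d'' : (Fin m ⊕ Fin m) →₀ ℕ :=
        e' + Finsupp.single (Sum.inl i) 1 + Finsupp.single (Sum.inr j) 1 with hd''
      have hmond' : monomial d' (1 : k)
          = monomial e' 1 * (X (Sum.inl j) * X (Sum.inr i)) := by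
        rw [← hrep, monomial_add_single, monomial_add_single, pow_one, pow_one, mul_assoc]
      have hmond'' : monomial d'' (1 : k)
          = monomial e' 1 * (X (Sum.inl i) * X (Sum.inr j)) := by
        rw [hd'', monomial_add_single, monomial_add_single, pow_one, pow_one, mul_assoc]
      have hmem' : monomial d' (1 : k) - monomial d'' 1 ∈ Imin k m := by
        rw [hmond', hmond'', ← mul_sub]
        exact Ideal.mul_mem_left _ _ (minor_mem hij.symm)
      have hE'' : Emap m d'' = Emap m d' := by
        rw [hd'', ← hrep]
        rw [Emap_add, Emap_add, Emap_add, Emap_add, Emap_single, Emap_single, Emap_single,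
          Emap_single]
        have hgE : (1 : ℕ) • gE m (Sum.inl i) + (1 : ℕ) • gE m (Sum.inr j)
            = (1 : ℕ) • gE m (Sum.inl j) + (1 : ℕ) • gE m (Sum.inr i) := by
          simp only [one_smul, gE, Sum.elim_inl, Sum.elim_inr]
          abel
        rw [add_assoc, add_assoc, hgE]
      have hd''i : d'' (Sum.inl i) ≠ 0 := by
        simp [hd'', Finsupp.add_apply, Finsupp.single_apply]
      have h1 := key d'' (hE.trans hE''.symm) hd''i
      have heq : monomial d (1 : k) - monomial d' 1
          = (monomial d 1 - monomial d'' 1) + (monomial d'' 1 - monomial d' 1) := by ring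
      rw [heq]
      apply add_mem h1
      have : monomial d'' (1 : k) - monomial d' 1 = -(monomial d' 1 - monomial d'' 1) := by ring
      rw [this]
      exact neg_mem hmem'
    · exact key d' hE hd'i

/-- The kernel of `phi` is contained in the ideal of minors. -/
lemma ker_phi_sub (f : MvPolynomial (Fin m ⊕ Fin m) k) (hf : phi k m f = 0) :
    f ∈ Imin k m := by
  classical
  have hφf : phi k m f = ∑ d ∈ f.support, monomial (Emap m d) (coeff d f) := by
    conv_lhs => rw [← support_sum_monomial_coeff f]
    rw [map_sum]
    exact Finset.sum_congr rfl fun d _ => phi_monomial d _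
  have hcoeff : ∀ e : (Bool ⊕ Fin m) →₀ ℕ,
      (∑ d ∈ f.support.filter fun d => Emap m d = e, coeff d f) = 0 := by
    intro e
    have h1 := congrArg (coeff e) (hφf.symm.trans hf)
    rw [coeff_sum, coeff_zero] at h1
    rw [← h1, Finset.sum_filter]
    apply Finset.sum_congr rfl
    intro d _
    rw [coeff_monomial]
  have hfib : (∑ e ∈ f.support.image (Emap m),
      ∑ d ∈ f.support.filter fun d => Emap m d = e, monomial d (coeff d f)) = f := by
    rw [Finset.sum_fiberwise_of_maps_to (fun d hd => Finset.mem_image_of_mem _ hd)]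
    exact support_sum_monomial_coeff f
  rw [← hfib]
  apply Ideal.sum_mem
  intro e he
  obtain ⟨d₀, hd₀mem, hd₀⟩ := Finset.mem_image.mp he
  have hstep : ∀ d : (Fin m ⊕ Fin m) →₀ ℕ, monomial d (coeff d f)
      = C (coeff d f) * (monomial d 1 - monomial d₀ 1) + C (coeff d f) * monomial d₀ 1 := by
    intro d
    have h1 : monomial d (coeff d f) = C (coeff d f) * monomial d 1 := by
      rw [C_mul_monomial, mul_one]
    rw [h1]; ring
  have hrw : (∑ d ∈ f.support.filter fun d => Emap m d = e, monomial d (coeff d f))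
      = ∑ d ∈ f.support.filter fun d => Emap m d = e,
          C (coeff d f) * (monomial d 1 - monomial d₀ 1) := by
    rw [Finset.sum_congr rfl (fun d _ => hstep d), Finset.sum_add_distrib]
    have h2 : (∑ d ∈ f.support.filter fun d => Emap m d = e, C (coeff d f) * monomial d₀ 1)
        = C (∑ d ∈ f.support.filter fun d => Emap m d = e, coeff d f) * monomial d₀ 1 := by
      rw [map_sum, Finset.sum_mul]
    rw [h2, hcoeff e, map_zero, zero_mul, add_zero]
  rw [hrw]
  apply Ideal.sum_mem
  intro d hd
  apply Ideal.mul_mem_left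
  have hdE : Emap m d = Emap m d₀ := by
    rw [(Finset.mem_filter.mp hd).2, hd₀]
  exact swap_lemma (∑ i : Fin m, d (Sum.inl i)) d d₀ hdE rfl

end Minors

/-! ### The weighted grading on the target -/

section Grading

variable {k : Type*} [Field k] {m : ℕ}

/-- Weights: `s, t` get `1`, the `u_i` get `-1`. -/
def wt (m : ℕ) : Bool ⊕ Fin m → ℤ := Sum.elim (fun _ => 1) (fun _ => -1)

lemma weight_gE (v : Fin m ⊕ Fin m) : weight (wt m) (gE m v) = 0 := by
  have hws : ∀ (a : Bool ⊕ Fin m) (n : ℕ),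
      weight (wt m) (Finsupp.single a n) = n • wt m a := by
    intro a n
    rw [weight_apply]
    exact Finsupp.sum_single_index (zero_smul _ _)
  cases v with
  | inl i =>
    rw [gE, Sum.elim_inl, map_add, hws, hws, one_smul, one_smul]
    simp [wt]
  | inr i =>
    rw [gE, Sum.elim_inr, map_add, hws, hws, one_smul, one_smul]
    simp [wt]

lemma phi_isWeightedHomogeneous (f : MvPolynomial (Fin m ⊕ Fin m) k) :
    IsWeightedHomogeneous (wt m) (phi k m f) 0 := by
  induction f using MvPolynomial.induction_on with
  | C a =>
    rw [phi_C]
    exact isWeightedHomogeneous_C _ _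
  | add p q hp hq =>
    rw [map_add]
    exact hp.add hq
  | mul_X p v hp =>
    rw [map_mul]
    have hX : IsWeightedHomogeneous (wt m) (phi k m (X v)) 0 := by
      rw [phi_X]
      exact isWeightedHomogeneous_monomial _ _ _ (weight_gE v)
    simpa using hp.mul hX

lemma comp0_mul (p q : MvPolynomial (Bool ⊕ Fin m) k)
    (hp : IsWeightedHomogeneous (wt m) p 0) :
    weightedHomogeneousComponent (wt m) 0 (p * q)
      = p * weightedHomogeneousComponent (wt m) 0 q := by
  classical
  ext d
  rw [coeff_weightedHomogeneousComponent, coeff_mul, coeff_mul]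
  simp only [coeff_weightedHomogeneousComponent]
  split_ifs with h
  · apply Finset.sum_congr rfl
    intro x hx
    have hxd : x.1 + x.2 = d := Finset.HasAntidiagonal.mem_antidiagonal.mp hx
    by_cases hp1 : coeff x.1 p = 0
    · rw [hp1, zero_mul, zero_mul]
    · have hw1 : weight (wt m) x.1 = 0 := hp hp1
      have hw2 : weight (wt m) x.2 = 0 := by
        have := congrArg (weight (wt m)) hxd
        rw [map_add, hw1, zero_add] at this
        rw [this, h]
      rw [if_pos hw2]
  · symm
    apply Finset.sum_eq_zero
    intro x hx
    have hxd : x.1 + x.2 = d := Finset.HasAntidiagonal.mem_antidiagonal.mp hx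
    by_cases hp1 : coeff x.1 p = 0
    · rw [hp1, zero_mul]
    · have hw1 : weight (wt m) x.1 = 0 := hp hp1
      have hw2 : weight (wt m) x.2 ≠ 0 := by
        intro hc
        apply h
        rw [← hxd, map_add, hw1, hc, add_zero]
      rw [if_neg hw2, mul_zero]

lemma weight_eval (d : (Bool ⊕ Fin m) →₀ ℕ) :
    weight (wt m) d
      = ((d (Sum.inl true) : ℤ) + (d (Sum.inl false) : ℤ))
        - ∑ i : Fin m, (d (Sum.inr i) : ℤ) := by
  rw [weight_apply, Finsupp.sum_fintype _ _ (fun v => by rw [zero_smul]),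
    Fintype.sum_sum_type]
  rw [Fintype.sum_bool]
  simp only [wt, Sum.elim_inl, Sum.elim_inr, smul_eq_mul, mul_one, mul_neg,
    ← Finset.sum_neg_distrib]
  push_cast
  ring_nf
  rw [Finset.sum_neg_distrib]
  push_cast
  ring

/-- Every monomial of weight zero is in the range of `phi`. -/
lemma monomial_mem_range_of_wt0 :
    ∀ (n : ℕ) (d : (Bool ⊕ Fin m) →₀ ℕ) (c : k),
      d (Sum.inl true) + d (Sum.inl false) = n → weight (wt m) d = 0 →
      monomial d c ∈ (phi k m).range := by
  classical
  intro n
  induction n with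
  | zero =>
    intro d c hn hw
    have ht : d (Sum.inl true) = 0 := by omega
    have hf : d (Sum.inl false) = 0 := by omega
    rw [weight_eval, ht, hf] at hw
    have hsum : (∑ i : Fin m, (d (Sum.inr i) : ℤ)) = 0 := by push_cast at hw ⊢; omega
    have hall : ∀ i : Fin m, d (Sum.inr i) = 0 := by
      have hnat : (∑ i : Fin m, d (Sum.inr i)) = 0 := by
        have : ((∑ i : Fin m, d (Sum.inr i) : ℕ) : ℤ) = 0 := by push_cast; exact hsum
        exact_mod_cast this
      intro i
      exact (Finset.sum_eq_zero_iff.mp hnat) i (Finset.mem_univ i)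
    have hd0 : d = 0 := by
      ext v
      cases v with
      | inl b => cases b with
        | true => exact ht
        | false => exact hf
      | inr i => exact hall i
    rw [hd0, monomial_zero']
    exact ⟨C c, phi_C c⟩
  | succ n IH =>
    intro d c hn hw
    have hupos : ∃ i : Fin m, d (Sum.inr i) ≠ 0 := by
      by_contra hcon
      push_neg at hcon
      rw [weight_eval] at hw
      rw [Finset.sum_eq_zero (fun i _ => by rw [hcon i]; norm_num)] at hw
      omega
    obtain ⟨i, hi⟩ := hupos
    have hcases : d (Sum.inl true) ≠ 0 ∨ d (Sum.inl false) ≠ 0 := by omega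
    -- helper doing one reduction step with the boolean b
    have step : ∀ b : Bool, d (Sum.inl b) ≠ 0 →
        monomial d c ∈ (phi k m).range := by
      intro b hb
      set d₂ : (Bool ⊕ Fin m) →₀ ℕ :=
        d - Finsupp.single (Sum.inl b) 1 - Finsupp.single (Sum.inr i) 1 with hd₂
      have hrep : d₂ + (Finsupp.single (Sum.inl b) 1 + Finsupp.single (Sum.inr i) 1) = d := by
        ext v
        simp only [hd₂, Finsupp.add_apply, Finsupp.tsub_apply, Finsupp.single_apply]
        split_ifs <;>
          first
            | omega
            | (rename_i h1 h2; subst h1; omega)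
            | (rename_i h1 h2; subst h2; omega)
            | (rename_i h1 h2; rw [← h1] at h2; exact absurd h2 (by simp))
            | (rename_i h1; subst h1; omega)
      have hvr : (phi k m) (X (if b then Sum.inl i else Sum.inr i))
          = monomial (Finsupp.single (Sum.inl b) 1 + Finsupp.single (Sum.inr i) 1) 1 := by
        cases b with
        | true => rw [phi_X]; rfl
        | false => rw [phi_X]; rfl
      have hfac : monomial d c
          = (phi k m) (X (if b then Sum.inl i else Sum.inr i)) * monomial d₂ c := by
        rw [hvr, monomial_mul, one_mul, ← hrep]
        rw [add_comm d₂ _]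
      have hn₂ : d₂ (Sum.inl true) + d₂ (Sum.inl false) = n := by
        have hc : d₂ (Sum.inl true) + d₂ (Sum.inl false) + 1
            = d (Sum.inl true) + d (Sum.inl false) := by
          rw [hd₂]
          cases b <;> simp [Finsupp.tsub_apply, Finsupp.single_apply] <;> omega
        omega
      have hw₂ : weight (wt m) d₂ = 0 := by
        have h1 : weight (wt m) d
            = weight (wt m) d₂
              + weight (wt m) (Finsupp.single (Sum.inl b) 1 + Finsupp.single (Sum.inr i) 1) := by
          rw [← map_add, hrep]
        have h2 : weight (wt m) (Finsupp.single (Sum.inl b) 1 + Finsupp.single (Sum.inr i) 1)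
            = 0 := by
          have hws : ∀ (a : Bool ⊕ Fin m) (n' : ℕ),
              weight (wt m) (Finsupp.single a n') = n' • wt m a := by
            intro a n'
            rw [weight_apply]
            exact Finsupp.sum_single_index (zero_smul _ _)
          rw [map_add, hws, hws, one_smul, one_smul]
          cases b <;> simp [wt]
        rw [h1, h2, add_zero] at hw
        exact hw
      have hmem₂ := IH d₂ c hn₂ hw₂
      rw [hfac]
      exact Subalgebra.mul_mem _ ⟨X (if b then Sum.inl i else Sum.inr i), rfl⟩ hmem₂
    rcases hcases with hb | hb
    · exact step true hb
    · exact step false hb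

lemma wt0_mem_range (p : MvPolynomial (Bool ⊕ Fin m) k)
    (hp : ∀ d ∈ p.support, weight (wt m) d = 0) : p ∈ (phi k m).range := by
  classical
  rw [← support_sum_monomial_coeff p]
  apply Subalgebra.sum_mem
  intro d hd
  exact monomial_mem_range_of_wt0 (d (Sum.inl true) + d (Sum.inl false)) d _ rfl (hp d hd)

end Grading

/-! ### The quadric `U` and squarefreeness -/

section Quadric

variable (k : Type*) [Field k] (m : ℕ)

/-- `U = ∑ u_i u_{rev i}`. -/
noncomputable def Upoly : MvPolynomial (Bool ⊕ Fin m) k :=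
  ∑ i : Fin m, X (Sum.inr i) * X (Sum.inr i.rev)

variable {k m}

lemma phi_sumQ :
    phi k m (∑ i : Fin m, xVar k i * yVar k i.rev)
      = X (Sum.inl true) * X (Sum.inl false) * Upoly k m := by
  rw [map_sum, Upoly, Finset.mul_sum]
  apply Finset.sum_congr rfl
  intro i _
  rw [xVar, yVar, map_mul]
  rw [phi, aeval_X, aeval_X, Sum.elim_inl, Sum.elim_inr]
  ring

lemma X_mul_X {K : Type*} [CommRing K] {σ : Type*} (a b : σ) :
    (X a * X b : MvPolynomial σ K) = monomial (Finsupp.single a 1 + Finsupp.single b 1) 1 := by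
  rw [← pow_one (X a : MvPolynomial σ K), ← pow_one (X b : MvPolynomial σ K),
    X_pow_eq_monomial, X_pow_eq_monomial, monomial_mul, one_mul]

lemma U_coeff_two (hchar : (2 : k) ≠ 0) (hm : 3 ≤ m) (i0 : Fin m) (hne : i0 ≠ i0.rev) :
    coeff (Finsupp.single (Sum.inr i0) 1 + Finsupp.single (Sum.inr i0.rev) 1)
      (Upoly k m) = 2 := by
  classical
  set ee : (Bool ⊕ Fin m) →₀ ℕ :=
    Finsupp.single (Sum.inr i0) 1 + Finsupp.single (Sum.inr i0.rev) 1 with hee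
  have hcond : ∀ i : Fin m,
      ((Finsupp.single (Sum.inr i) 1 + Finsupp.single (Sum.inr i.rev) 1 :
        (Bool ⊕ Fin m) →₀ ℕ) = ee) ↔ (i = i0 ∨ i = i0.rev) := by
    intro i
    constructor
    · intro hh
      by_contra hcon
      push_neg at hcon
      obtain ⟨hc1, hc2⟩ := hcon
      have h3 := congrArg (fun g => g (Sum.inr i)) hh
      simp only [hee, Finsupp.add_apply, Finsupp.single_apply, Sum.inr.injEq] at h3
      have e3 : ¬(i0 = i) := fun hx => hc1 hx.symm
      have e4 : ¬(i0.rev = i) := fun hx => hc2 hx.symm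
      rw [if_neg e3, if_neg e4] at h3
      split_ifs at h3 <;> omega
    · rintro (rfl | rfl)
      · rfl
      · rw [Fin.rev_rev, add_comm]
  rw [Upoly, Finset.sum_congr rfl (fun i (_ : i ∈ Finset.univ) => X_mul_X (K := k)
    (Sum.inr i) (Sum.inr i.rev)), coeff_sum]
  have hterm : ∀ i : Fin m, coeff ee (monomial
      (Finsupp.single (Sum.inr i) 1 + Finsupp.single (Sum.inr i.rev) 1) (1 : k))
      = if i = i0 ∨ i = i0.rev then 1 else 0 := by
    intro i
    rw [coeff_monomial]
    by_cases hh : i = i0 ∨ i = i0.rev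
    · rw [if_pos hh, if_pos ((hcond i).mpr hh)]
    · rw [if_neg hh, if_neg (fun c => hh ((hcond i).mp c))]
  rw [Finset.sum_congr rfl (fun i _ => hterm i), ← Finset.sum_filter]
  have hfil : Finset.univ.filter (fun i : Fin m => i = i0 ∨ i = i0.rev) = {i0, i0.rev} := by
    ext x; simp
  rw [hfil, Finset.sum_pair hne]
  norm_num

lemma U_ne_zero (hchar : (2 : k) ≠ 0) (hm : 3 ≤ m) (i0 : Fin m) (hne : i0 ≠ i0.rev) :
    Upoly k m ≠ 0 := by
  intro h
  have := U_coeff_two hchar hm i0 hne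
  rw [h, coeff_zero] at this
  exact hchar this.symm

lemma not_X_inl_dvd_U (hchar : (2 : k) ≠ 0) (hm : 3 ≤ m) (i0 : Fin m) (hne : i0 ≠ i0.rev)
    (b : Bool) : ¬ (X (Sum.inl b) ∣ Upoly k m) := by
  intro h
  have hkill : kill k (Sum.inl b) (Upoly k m) = Upoly k m := by
    rw [Upoly, map_sum]
    apply Finset.sum_congr rfl
    intro i _
    rw [map_mul, kill_X_of_ne (by simp), kill_X_of_ne (by simp)]
  have := kill_eq_zero_of_dvd h
  rw [hkill] at this
  exact U_ne_zero hchar hm i0 hne this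

lemma pderiv_U (z : Fin m) :
    pderiv (Sum.inr z) (Upoly k m) = C 2 * X (Sum.inr z.rev) := by
  classical
  rw [Upoly, map_sum]
  have hterm : ∀ i : Fin m,
      pderiv (Sum.inr z) (X (Sum.inr i) * X (Sum.inr i.rev) : MvPolynomial (Bool ⊕ Fin m) k)
        = (if i = z then X (Sum.inr i.rev) else 0)
          + (if i = z.rev then X (Sum.inr i) else 0) := by
    intro i
    rw [pderiv_mul]
    by_cases h1 : i = z <;> by_cases h2 : i = z.rev
    · rw [if_pos h1, if_pos h2]
      rw [h1] at h2 ⊢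
      rw [← h2, pderiv_X_self, one_mul, mul_one]
    · rw [if_pos h1, if_neg h2]
      rw [h1] at h2 ⊢
      have hne2 : (Sum.inr z.rev : Bool ⊕ Fin m) ≠ Sum.inr z := by
        intro hh
        exact h2 (Sum.inr.inj hh).symm
      rw [pderiv_X_self, pderiv_X_of_ne hne2, one_mul, mul_zero, add_zero]
    · rw [if_neg h1, if_pos h2]
      rw [h2] at h1 ⊢
      have hne1 : (Sum.inr z.rev : Bool ⊕ Fin m) ≠ Sum.inr z := by
        intro hh
        exact h1 (Sum.inr.inj hh)
      rw [Fin.rev_rev, pderiv_X_of_ne hne1, pderiv_X_self, zero_mul, mul_one]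
    · have hne1 : (Sum.inr i : Bool ⊕ Fin m) ≠ Sum.inr z := by
        intro hh; exact h1 (Sum.inr.inj hh)
      have hne2 : (Sum.inr i.rev : Bool ⊕ Fin m) ≠ Sum.inr z := by
        intro hh
        exact h2 (Fin.rev_eq_iff.mp (Sum.inr.inj hh))
      rw [if_neg h1, if_neg h2, pderiv_X_of_ne hne1, pderiv_X_of_ne hne2, zero_mul, mul_zero]
  rw [Finset.sum_congr rfl (fun i _ => hterm i), Finset.sum_add_distrib,
    Fintype.sum_ite_eq' z (fun i : Fin m => X (Sum.inr i.rev)),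
    Fintype.sum_ite_eq' z.rev (fun i : Fin m => (X (Sum.inr i) : MvPolynomial (Bool ⊕ Fin m) k))]
  rw [show (C (2 : k) : MvPolynomial (Bool ⊕ Fin m) k) = 2 from map_ofNat C 2, two_mul]

lemma squarefree_U (hchar : (2 : k) ≠ 0) (hm : 3 ≤ m) : Squarefree (Upoly k m) := by
  classical
  have h0m : 0 < m := by omega
  set i0 : Fin m := ⟨0, h0m⟩ with hi0
  have hrev : (i0.rev : ℕ) = m - 1 := by
    rw [Fin.val_rev]
  have hne : i0 ≠ i0.rev := by
    intro h
    have h1 := congrArg Fin.val h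
    rw [hrev] at h1
    have h2 : (i0 : ℕ) = 0 := rfl
    omega
  intro x hx
  obtain ⟨v, hv⟩ := hx
  have hder : ∀ z : Fin m, x ∣ pderiv (Sum.inr z) (Upoly k m) := by
    intro z
    rw [hv, pderiv_mul, pderiv_mul]
    apply dvd_add
    · apply dvd_mul_of_dvd_left
      exact dvd_add (dvd_mul_left x _) (dvd_mul_right x _)
    · exact dvd_mul_of_dvd_left (dvd_mul_right x x) _
  have hCu : ∀ z : Fin m, x ∣ C 2 * X (Sum.inr z.rev) → x ∣ X (Sum.inr z.rev) := by
    intro z h1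
    have heq : (X (Sum.inr z.rev) : MvPolynomial (Bool ⊕ Fin m) k)
        = C (2⁻¹ : k) * (C 2 * X (Sum.inr z.rev)) := by
      rw [← mul_assoc, ← C_mul, inv_mul_cancel₀ hchar, C_1, one_mul]
    rw [heq]
    exact Dvd.dvd.mul_left h1 _
  have hdvd1 : x ∣ X (Sum.inr i0.rev) := by
    apply hCu i0
    have h1 := hder i0
    rwa [pderiv_U] at h1
  have hdvd2 : x ∣ X (Sum.inr i0) := by
    have h1 := hder i0.rev
    rw [pderiv_U] at h1
    have h2 := hCu i0.rev h1
    rwa [Fin.rev_rev] at h2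
  obtain ⟨y, hy⟩ := hdvd1
  rcases (prime_X_mv (Sum.inr i0.rev)).irreducible.isUnit_or_isUnit hy with h | h
  · exact h
  · exfalso
    obtain ⟨z', hz'⟩ := IsUnit.exists_right_inv h
    have hXx : (X (Sum.inr i0.rev) : MvPolynomial (Bool ⊕ Fin m) k) ∣ x := by
      refine ⟨z', ?_⟩
      calc x = x * (y * z') := by rw [hz', mul_one]
        _ = X (Sum.inr i0.rev) * z' := by rw [← mul_assoc, ← hy]
    have hfin := hXx.trans hdvd2
    rw [X_dvd_X] at hfin
    exact hne (by simpa using hfin.symm)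

lemma squarefree_stU (hchar : (2 : k) ≠ 0) (hm : 3 ≤ m) :
    Squarefree (X (Sum.inl true) * X (Sum.inl false) * Upoly k m) := by
  classical
  have h0m : 0 < m := by omega
  set i0 : Fin m := ⟨0, h0m⟩ with hi0
  have hrev : (i0.rev : ℕ) = m - 1 := by
    rw [Fin.val_rev]
  have hne : i0 ≠ i0.rev := by
    intro h
    have h1 := congrArg Fin.val h
    rw [hrev] at h1
    have h2 : (i0 : ℕ) = 0 := rfl
    omega
  have hps : Prime (X (Sum.inl true) : MvPolynomial (Bool ⊕ Fin m) k) := prime_X_mv _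
  have hpt : Prime (X (Sum.inl false) : MvPolynomial (Bool ⊕ Fin m) k) := prime_X_mv _
  have hst : IsRelPrime (X (Sum.inl true) : MvPolynomial (Bool ⊕ Fin m) k)
      (X (Sum.inl false)) := by
    rw [hps.irreducible.isRelPrime_iff_not_dvd, X_dvd_X]
    simp
  have hsU : IsRelPrime (X (Sum.inl true) : MvPolynomial (Bool ⊕ Fin m) k) (Upoly k m) :=
    hps.irreducible.isRelPrime_iff_not_dvd.mpr (not_X_inl_dvd_U hchar hm i0 hne true)
  have htU : IsRelPrime (X (Sum.inl false) : MvPolynomial (Bool ⊕ Fin m) k) (Upoly k m) :=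
    hpt.irreducible.isRelPrime_iff_not_dvd.mpr (not_X_inl_dvd_U hchar hm i0 hne false)
  refine squarefree_mul_iff.mpr ⟨IsRelPrime.mul_left hsU htU, ?_, squarefree_U hchar hm⟩
  exact squarefree_mul_iff.mpr ⟨hst, hps.squarefree, hpt.squarefree⟩

lemma span_stU_radical (hchar : (2 : k) ≠ 0) (hm : 3 ≤ m) :
    (Ideal.span {X (Sum.inl true) * X (Sum.inl false) * Upoly k m}).IsRadical := by
  intro p hp
  obtain ⟨n, hn⟩ := hp
  rw [Ideal.mem_span_singleton] at hn ⊢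
  exact (squarefree_stU hchar hm).isRadical n p hn

end Quadric

/-! ### The main ideal identity -/

section Main

variable {k : Type*} [Field k] {m : ℕ}

lemma ideal_eq (hchar : (2 : k) ≠ 0) (hm : 3 ≤ m) :
    specialChartIdeal k m
      = Ideal.comap (phi k m)
          (Ideal.span {X (Sum.inl true) * X (Sum.inl false) * Upoly k m}) := by
  apply le_antisymm
  · rw [specialChartIdeal, Ideal.span_le]
    rintro p (⟨i, j, hij, rfl⟩ | rfl)
    · rw [SetLike.mem_coe, Ideal.mem_comap]
      have hzero : phi k m (xVar k i * yVar k j - xVar k j * yVar k i) = 0 := by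
        rw [map_sub, map_mul, map_mul, xVar, yVar, xVar, yVar]
        rw [phi, aeval_X, aeval_X, aeval_X, aeval_X, Sum.elim_inl, Sum.elim_inr,
          Sum.elim_inl, Sum.elim_inr]
        ring
      rw [hzero]
      exact zero_mem _
    · rw [SetLike.mem_coe, Ideal.mem_comap, phi_sumQ]
      exact Ideal.subset_span rfl
  · intro f hf
    rw [Ideal.mem_comap, Ideal.mem_span_singleton] at hf
    obtain ⟨h, hh⟩ := hf
    set h₀ := weightedHomogeneousComponent (wt m) 0 h with hh₀
    have hstU_hom : IsWeightedHomogeneous (wt m)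
        (X (Sum.inl true) * X (Sum.inl false) * Upoly k m) 0 := by
      rw [← phi_sumQ]
      exact phi_isWeightedHomogeneous _
    have h1 : phi k m f = (X (Sum.inl true) * X (Sum.inl false) * Upoly k m) * h₀ := by
      calc phi k m f
          = weightedHomogeneousComponent (wt m) 0 (phi k m f) :=
            ((phi_isWeightedHomogeneous f).weightedHomogeneousComponent_same).symm
        _ = weightedHomogeneousComponent (wt m) 0
              ((X (Sum.inl true) * X (Sum.inl false) * Upoly k m) * h) := by rw [hh]
        _ = (X (Sum.inl true) * X (Sum.inl false) * Upoly k m) * h₀ :=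
            comp0_mul _ _ hstU_hom
    have hr : h₀ ∈ (phi k m).range := by
      apply wt0_mem_range
      intro d hd
      by_contra hcon
      have : coeff d h₀ = 0 := by
        rw [hh₀, coeff_weightedHomogeneousComponent, if_neg hcon]
      exact (MvPolynomial.mem_support_iff.mp hd) this
    obtain ⟨g, hg⟩ := hr
    have hg' : phi k m g = h₀ := hg
    have hker : phi k m (f - (∑ i : Fin m, xVar k i * yVar k i.rev) * g) = 0 := by
      rw [map_sub, map_mul, hg', phi_sumQ, h1]
      ring
    have hmin : f - (∑ i : Fin m, xVar k i * yVar k i.rev) * g ∈ Imin k m :=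
      ker_phi_sub _ hker
    have hle : Imin k m ≤ specialChartIdeal k m := by
      rw [Imin, Ideal.span_le]
      rintro p ⟨i, j, hij, rfl⟩
      exact Ideal.subset_span (Or.inl ⟨i, j, hij, rfl⟩)
    have hQ : (∑ i : Fin m, xVar k i * yVar k i.rev) ∈ specialChartIdeal k m :=
      Ideal.subset_span (Or.inr rfl)
    have : f = (f - (∑ i : Fin m, xVar k i * yVar k i.rev) * g)
        + (∑ i : Fin m, xVar k i * yVar k i.rev) * g := by ring
    rw [this]
    exact add_mem (hle hmin) (Ideal.mul_mem_right g _ hQ)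

end Main

end SpecialChartAux

/-- The special fiber of the chart of the splitting model is reduced; equivalently
`Ī_m` is a radical ideal. -/
theorem specialChart_reduced (k : Type*) [Field k] (hchar : (2 : k) ≠ 0)
    (m : ℕ) (hm : 3 ≤ m) :
    IsReduced (MvPolynomial (Fin m ⊕ Fin m) k ⧸ specialChartIdeal k m) ∧
      (specialChartIdeal k m).IsRadical := by
  have hrad : (specialChartIdeal k m).IsRadical := by
    rw [SpecialChartAux.ideal_eq hchar hm]
    exact (SpecialChartAux.span_stU_radical hchar hm).comap _
  exact ⟨(Ideal.isRadical_iff_quotient_reduced _).mp hrad, hrad⟩
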